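/- arXiv:cs/0311043 — 6 statements merged into one kernel-verified Lean document; each statement's English description precedes it below -/
import Mathlib

section
/- With mem k l ↔ l.get? k = some true, for all lists l₁ l₂ : List Bool, the following are equivalent: (i) ∀ k, mem k l₁ ↔ mem k l₂; (ii) there exists m : ℕ such that l₁ ++ List.replicate m false = l₂ or l₂ ++ List.replicate m false = l₁. -/
def mem (k : ℕ) (l : List Bool) : Prop := l[k]? = some true

lemma mem_append_replicate (l : List Bool) (m k : ℕ) :
    mem k (l ++ List.replicate m false) ↔ mem k l := by
  unfold mem
  rcases lt_or_ge k l.length with h | h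
  · rw [List.getElem?_append_left h]
  · rw [List.getElem?_eq_none_iff.2 h]
    rcases lt_or_ge k (l.length + m) with h2 | h2
    · rw [List.getElem?_append_right h, List.getElem?_eq_getElem (by simp; omega)]
      simp
    · rw [List.getElem?_eq_none_iff.2 (by simp; omega)]

lemma aux (l₁ l₂ : List Bool) (h : ∀ k, mem k l₁ ↔ mem k l₂)
    (hle : l₁.length ≤ l₂.length) :
    l₁ ++ List.replicate (l₂.length - l₁.length) false = l₂ := by
  apply List.ext_getElem?
  intro k
  have hk := h k
  unfold mem at hk
  rcases lt_or_ge k l₁.length with h1 | h1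
  · rw [List.getElem?_append_left h1]
    have h2 : k < l₂.length := lt_of_lt_of_le h1 hle
    rw [List.getElem?_eq_getElem h1, List.getElem?_eq_getElem h2] at hk ⊢
    have := (Bool.eq_iff_iff (a := l₁[k]) (b := l₂[k])).2
      (by simpa using hk)
    rw [this]
  · rw [List.getElem?_append_right h1]
    rcases lt_or_ge k l₂.length with h2 | h2
    · rw [List.getElem?_eq_getElem (by simp; omega), List.getElem?_eq_getElem h2]
      simp only [List.getElem_replicate]
      rw [List.getElem?_eq_none_iff.2 h1, List.getElem?_eq_getElem h2] at hk
      simp only [Option.some.injEq] at hk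
      symm
      by_contra hb
      simp at hb
      exact absurd (hk.2 hb) (by simp)
    · rw [List.getElem?_eq_none_iff.2 (by simp; omega), List.getElem?_eq_none_iff.2 h2]

theorem same_set_iff_trailing_false (l₁ l₂ : List Bool) :
    (∀ k : ℕ, mem k l₁ ↔ mem k l₂) ↔
    (∃ m : ℕ, l₁ ++ List.replicate m false = l₂ ∨ l₂ ++ List.replicate m false = l₁) := by
  constructor
  · intro h
    rcases le_total l₁.length l₂.length with hle | hle
    · exact ⟨_, Or.inl (aux l₁ l₂ h hle)⟩
    · exact ⟨_, Or.inr (aux l₂ l₁ (fun k => (h k).symm) hle)⟩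
  · rintro ⟨m, h | h⟩ k <;> rw [← h] <;> rw [mem_append_replicate]
end

section
/- Define maxP : List Bool → ℕ → Prop inductively by: maxP (true :: l) 0 if new1 l; maxP (true :: l) (n+1) if maxP l n; maxP (false :: l) (n+1) if maxP l n; where new1 l means l consists only of false entries. Then for every l : List Bool and n : ℕ, maxP l n holds iff mem n l ∧ ∀ k, mem k l → k ≤ n (where mem k l ↔ l.get? k = some true). -/
inductive new1 : List Bool → Prop
  | nil : new1 []
  | cons (l : List Bool) : new1 l → new1 (false :: l)

inductive maxP : List Bool → ℕ → Prop
  | base (l : List Bool) : new1 l → maxP (true :: l) 0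
  | succTrue (l : List Bool) (n : ℕ) : maxP l n → maxP (true :: l) (n + 1)
  | succFalse (l : List Bool) (n : ℕ) : maxP l n → maxP (false :: l) (n + 1)

lemma new1_iff (l : List Bool) : new1 l ↔ ∀ k, ¬ mem k l := by
  constructor
  · intro h
    induction h with
    | nil => intro k hk; simp [mem] at hk
    | cons l' _ ih =>
      intro k hk
      cases k with
      | zero => simp [mem] at hk
      | succ k => exact ih k hk
  · intro h
    induction l with
    | nil => exact new1.nil
    | cons b l ih =>
      cases b with
      | false =>
        exact new1.cons l (ih fun k hk => h (k+1) hk)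
      | true => exact absurd (by simp [mem] : mem 0 (true :: l)) (h 0)

theorem maxP_correct (l : List Bool) (n : ℕ) :
    maxP l n ↔ (mem n l ∧ ∀ k : ℕ, mem k l → k ≤ n) := by
  induction l generalizing n with
  | nil =>
    constructor
    · intro h; cases h
    · rintro ⟨hm, -⟩; simp [mem] at hm
  | cons b l ih =>
    constructor
    · intro h
      cases h with
      | base _ hn =>
        refine ⟨by simp [mem], fun k hk => ?_⟩
        cases k with
        | zero => exact le_refl 0
        | succ k => exact absurd hk ((new1_iff l).mp hn k)
      | succTrue _ n h =>
        obtain ⟨hm, hb⟩ := (ih n).mp h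
        refine ⟨hm, fun k hk => ?_⟩
        cases k with
        | zero => omega
        | succ k => exact Nat.succ_le_succ (hb k hk)
      | succFalse _ n h =>
        obtain ⟨hm, hb⟩ := (ih n).mp h
        refine ⟨hm, fun k hk => ?_⟩
        cases k with
        | zero => simp [mem] at hk
        | succ k => exact Nat.succ_le_succ (hb k hk)
    · rintro ⟨hm, hb⟩
      cases n with
      | zero =>
        cases b with
        | true =>
          refine maxP.base l ((new1_iff l).mpr fun k hk => ?_)
          have := hb (k+1) hk
          omega
        | false => simp [mem] at hm
      | succ n =>
        have h : maxP l n := (ih n).mpr ⟨hm, fun k hk => Nat.le_of_succ_le_succ (hb (k+1) hk)⟩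
        cases b with
        | true => exact maxP.succTrue l n h
        | false => exact maxP.succFalse l n h
end

section
/- Let a state be (W, U) : Finset ℕ × Finset ℕ. Define use (W, U) (W', U') := ∃ n ∈ W, (∀ x ∈ W ∪ U, n ≤ x) ∧ W' = W.erase n ∧ U' = insert n U, and c (W, U) := (∃ n ∈ W, ∀ x ∈ W ∪ U, n ≤ x) ∧ U ≠ ∅. Then there are no states S, S' with c S' and use S S'. -/
abbrev State := Finset ℕ × Finset ℕ

def unsafe' (S : State) : Prop := ∃ n₁ ∈ S.2, ∃ n₂ ∈ S.2, n₁ ≠ n₂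

def cre (S S' : State) : Prop :=
  S'.2 = S.2 ∧ ((S.1 ∪ S.2 = ∅ ∧ S'.1 = {0}) ∨
    (S.1 ∪ S.2 ≠ ∅ ∧ ∃ m, (∀ x ∈ S.1 ∪ S.2, x ≤ m) ∧ m ∈ S.1 ∪ S.2 ∧ S'.1 = insert (m + 1) S.1))

def use (S S' : State) : Prop :=
  ∃ n ∈ S.1, (∀ x ∈ S.1 ∪ S.2, n ≤ x) ∧ S'.1 = S.1.erase n ∧ S'.2 = insert n S.2

def rel (S S' : State) : Prop :=
  S'.1 = S.1 ∧ ∃ n ∈ S.2, S'.2 = S.2.erase n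

def c (S : State) : Prop := (∃ n ∈ S.1, ∀ x ∈ S.1 ∪ S.2, n ≤ x) ∧ S.2 ≠ ∅

def step (S S' : State) : Prop := cre S S' ∨ use S S' ∨ rel S S'

def reach (S : State) : Prop := Relation.ReflTransGen step (∅, ∅) S

theorem no_c_after_use : ¬ ∃ S S1 : State, c S1 ∧ use S S1 := by
  rintro ⟨S, S1, ⟨⟨m, hm1, hmin1⟩, -⟩, n, hn, hmin, hW1, hU1⟩
  rw [hW1] at hm1
  have hmn : m ≠ n := (Finset.mem_erase.mp hm1).1
  have hmW : m ∈ S.1 := (Finset.mem_erase.mp hm1).2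
  have h1 : m ≤ n := hmin1 n (by rw [hU1]; exact Finset.mem_union_right _ (Finset.mem_insert_self _ _))
  have h2 : n ≤ m := hmin m (Finset.mem_union_left _ hmW)
  exact hmn (le_antisymm h1 h2)
end

section
/- Let a state be (W, U) : Finset ℕ × Finset ℕ. Define cre (W, U) (W', U') := U' = U ∧ ((W ∪ U = ∅ ∧ W' = {0}) ∨ (W ∪ U ≠ ∅ ∧ ∃ m, (∀ x ∈ W ∪ U, x ≤ m) ∧ m ∈ W ∪ U ∧ W' = insert (m+1) W)), and c (W, U) := (∃ n ∈ W, ∀ x ∈ W ∪ U, n ≤ x) ∧ U ≠ ∅. Then for all states S, S', if c S' and cre S S', then c S. -/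
theorem cre_c_back (S S1 : State) (h1 : c S1) (h2 : cre S S1) : c S := by
  obtain ⟨hU, hcase⟩ := h2
  obtain ⟨⟨n, hnW, hmin⟩, hne⟩ := h1
  rw [hU] at hne
  rcases hcase with ⟨hempty, _⟩ | ⟨_, m, hmax, hmem, hW⟩
  · exact absurd (Finset.subset_empty.mp (hempty ▸ Finset.subset_union_right)) hne
  · obtain ⟨u, hu⟩ := Finset.nonempty_iff_ne_empty.mpr hne
    have hum : u ≤ m := hmax u (Finset.mem_union_right _ hu)
    have hnu : n ≤ u := hmin u (by rw [hU]; exact Finset.mem_union_right _ hu)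
    have hn : n ∈ S.1 := by
      rw [hW] at hnW
      rcases Finset.mem_insert.mp hnW with h | h
      · omega
      · exact h
    refine ⟨⟨n, hn, fun x hx => ?_⟩, hne⟩
    apply hmin
    rw [hW, hU]
    rcases Finset.mem_union.mp hx with h | h
    · exact Finset.mem_union_left _ (Finset.mem_insert_of_mem h)
    · exact Finset.mem_union_right _ h
end

section
/- Let a state be (W, U) : Finset ℕ × Finset ℕ, with transitions cre, use, rel as follows: cre (W,U) (W',U') := U' = U ∧ ((W ∪ U = ∅ ∧ W' = {0}) ∨ (W ∪ U ≠ ∅ ∧ ∃ m, (∀ x ∈ W ∪ U, x ≤ m) ∧ m ∈ W ∪ U ∧ W' = insert (m+1) W)); use (W,U) (W',U') := ∃ n ∈ W, (∀ x ∈ W ∪ U, n ≤ x) ∧ W' = W.erase n ∧ U' = insert n U; rel (W,U) (W',U') := W' = W ∧ ∃ n ∈ U, U' = U.erase n. Let step S S' := cre S S' ∨ use S S' ∨ rel S S'. Define unsafe (W,U) := ∃ n₁ ∈ U, ∃ n₂ ∈ U, n₁ ≠ n₂ and c (W,U) := (∃ n ∈ W, ∀ x ∈ W ∪ U, n ≤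 x) ∧ U ≠ ∅. Then for all states S, S', if ¬unsafe S ∧ ¬c S and step S S', then ¬unsafe S' ∧ ¬c S'. -/
theorem invariant_step (S S1 : State) (h : ¬ unsafe' S ∧ ¬ c S) (hs : step S S1) :
    ¬ unsafe' S1 ∧ ¬ c S1 := by
  obtain ⟨hu, hc⟩ := h
  rcases hs with hcre | huse | hrel
  · obtain ⟨hU, hW⟩ := hcre
    constructor
    · rintro ⟨n₁, h1, n₂, h2, hne⟩
      exact hu ⟨n₁, hU ▸ h1, n₂, hU ▸ h2, hne⟩
    · rintro ⟨⟨n, hn, hmin⟩, hne⟩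
      rcases hW with ⟨hemp, hW⟩ | ⟨hne2, m, hmax, hm, hW⟩
      · exact hne (hU.trans (Finset.union_eq_empty.mp hemp).2)
      · rw [hW] at hn
        rcases Finset.mem_insert.mp hn with rfl | hn
        · have hm' : m ∈ S1.1 ∪ S1.2 := by
            rw [hW, hU]
            rcases Finset.mem_union.mp hm with h | h
            · exact Finset.mem_union_left _ (Finset.mem_insert_of_mem h)
            · exact Finset.mem_union_right _ h
          have := hmin m hm'
          omega
        · apply hc
          refine ⟨⟨n, hn, fun x hx => ?_⟩, fun hU2 => hne (hU.trans hU2)⟩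
          apply hmin
          rw [hW, hU]
          rcases Finset.mem_union.mp hx with h | h
          · exact Finset.mem_union_left _ (Finset.mem_insert_of_mem h)
          · exact Finset.mem_union_right _ h
  · obtain ⟨n, hn, hmin, hW, hU⟩ := huse
    have hUe : S.2 = ∅ := by
      by_contra hne
      exact hc ⟨⟨n, hn, hmin⟩, hne⟩
    constructor
    · rintro ⟨n₁, h1, n₂, h2, hne⟩
      rw [hU, hUe] at h1 h2
      simp at h1 h2
      omega
    · rintro ⟨⟨n', hn', hmin'⟩, _⟩
      rw [hW] at hn'
      obtain ⟨hne', hn'W⟩ := Finset.mem_erase.mp hn'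
      have h1 : n' ≤ n := hmin' n (by
        rw [hU]; exact Finset.mem_union_right _ (Finset.mem_insert_self _ _))
      have h2 : n ≤ n' := hmin n' (Finset.mem_union_left _ hn'W)
      omega
  · obtain ⟨hW, n, hn, hU⟩ := hrel
    have hall : ∀ m ∈ S.2, m = n := by
      intro m hm
      by_contra hne
      exact hu ⟨m, hm, n, hn, hne⟩
    have hUe : S1.2 = ∅ := by
      rw [hU]
      ext x
      simp only [Finset.mem_erase, Finset.notMem_empty, iff_false, not_and]
      intro hxn hx
      exact hxn (hall x hx)
    constructor
    · rintro ⟨n₁, h1, _⟩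
      rw [hUe] at h1
      exact absurd h1 (Finset.notMem_empty _)
    · rintro ⟨_, hne⟩
      exact hne hUe
end

section
/- Let states, transitions cre, use, rel, and step be as in the DBakery protocol (step S S' := cre S S' ∨ use S S' ∨ rel S S'), and let reach be the reflexive-transitive closure of step starting from the initial state (∅, ∅). Then for every state (W, U) with reach (W, U), U contains at most one element (i.e., ¬∃ n₁ ∈ U, ∃ n₂ ∈ U, n₁ ≠ n₂; equivalently U.card ≤ 1). -/
def inv' (S : State) : Prop := S.2.card ≤ 1 ∧ ∀ u ∈ S.2, ∀ w ∈ S.1, u < w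

lemma inv_step {S S' : State} (hS : inv' S) (h : step S S') : inv' S' := by
  obtain ⟨hc, hlt⟩ := hS
  rcases h with h | h | h
  · obtain ⟨h2, h1⟩ := h
    constructor
    · rw [h2]; exact hc
    · intro u hu w hw
      rw [h2] at hu
      rcases h1 with ⟨he, h1⟩ | ⟨_, m, hm, hmem, h1⟩
      · exact absurd (Finset.mem_union_right S.1 hu) (by simp [he])
      · rw [h1] at hw
        rcases Finset.mem_insert.mp hw with rfl | hw
        · exact Nat.lt_succ_of_le (hm u (Finset.mem_union_right _ hu))
        · exact hlt u hu w hw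
  · obtain ⟨n, hn, hmin, h1, h2⟩ := h
    have hU : S.2 = ∅ := by
      by_contra hne
      obtain ⟨u, hu⟩ := Finset.nonempty_iff_ne_empty.mpr hne
      exact absurd (hmin u (Finset.mem_union_right _ hu)) (not_le.mpr (hlt u hu n hn))
    constructor
    · rw [h2, hU]; simp
    · intro u hu w hw
      rw [h2, hU] at hu
      simp at hu
      subst hu
      rw [h1] at hw
      obtain ⟨hne, hw⟩ := Finset.mem_erase.mp hw
      exact lt_of_le_of_ne (hmin w (Finset.mem_union_left _ hw)) (Ne.symm hne)
  · obtain ⟨h1, n, hn, h2⟩ := h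
    constructor
    · rw [h2]; exact le_trans (Finset.card_le_card (Finset.erase_subset _ _)) hc
    · intro u hu w hw
      rw [h2] at hu
      rw [h1] at hw
      exact hlt u (Finset.mem_of_mem_erase hu) w hw

lemma inv_reach {S : State} (h : reach S) : inv' S := by
  induction h with
  | refl => exact ⟨by simp, by simp⟩
  | tail _ hstep ih => exact inv_step ih hstep

theorem mutual_exclusion (W U : Finset ℕ) (h : reach (W, U)) :
    (¬ ∃ n₁ ∈ U, ∃ n₂ ∈ U, n₁ ≠ n₂) ∧ U.card ≤ 1 := by
  have hc : U.card ≤ 1 := (inv_reach h).1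
  refine ⟨?_, hc⟩
  rintro ⟨n₁, h₁, n₂, h₂, hne⟩
  exact hne (Finset.card_le_one.mp hc n₁ h₁ n₂ h₂)
end
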